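/- Let $A$ be a simple C*-algebra. Suppose there exist a dimension function $d$ on $A$ and a positive element $a$ in the Pedersen ideal of $A$ with $0 < d(a) < \infty$. Then every positive element of the Pedersen ideal of $A$ is finite, i.e., there is no nonzero $b \in A_+$ with $a' \oplus b \precsim a'$ for $a'$ a positive element of the Pedersen ideal. -/

import Mathlib

open Filter Topology Matrix
open scoped ENNReal

/-! Basic Cuntz subequivalence and positive cut-downs in a (non-unital) C*-algebra. -/

/-- Cuntz subequivalence `a ≾ b` in a C*-algebra: there is a sequence `v n` with
`‖a - v n * b * (v n)*‖ → 0`. -/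
def CuntzLE {A : Type*} [NonUnitalCStarAlgebra A] (a b : A) : Prop :=
  ∃ v : ℕ → A, Tendsto (fun n => ‖a - v n * b * star (v n)‖) atTop (𝓝 0)

/-- The cut-down `(a - ε)₊`, obtained by applying the continuous functional calculus with the
function `t ↦ max (t - ε) 0`. -/
noncomputable def posCut {A : Type*} [NonUnitalCStarAlgebra A] [PartialOrder A]
    [StarOrderedRing A] (a : A) (ε : ℝ) : A :=
  cfcₙ (fun t : ℝ => max (t - ε) 0) a

/-- Positivity of a matrix over a star ring, i.e. of an element of a matrix algebra over a
C*-algebra: `a = cᴴ * c` for some `c`. -/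
def MatPos {R : Type*} [NonUnitalRing R] [StarRing R] {ι : Type*} [Fintype ι]
    (a : Matrix ι ι R) : Prop :=
  ∃ c : Matrix ι ι R, a = cᴴ * c

/-- Cuntz subequivalence between elements of (possibly different) matrix algebras over a
C*-algebra, phrased via convergence in the (product) topology of matrices, which agrees with the
norm topology of the matrix C*-algebra. -/
def MCuntzLE {A : Type*} [NonUnitalCStarAlgebra A] {ι κ : Type*} [Fintype ι] [Fintype κ]
    (a : Matrix ι ι A) (b : Matrix κ κ A) : Prop :=
  ∃ v : ℕ → Matrix ι κ A, Tendsto (fun n => v n * b * (v n)ᴴ) atTop (𝓝 a)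

/-- The embedding of `A` as `1 × 1` matrices. -/
def mOne {A : Type*} (a : A) : Matrix (Fin 1) (Fin 1) A := Matrix.of fun _ _ => a

/-- `n` copies `a ⊕ a ⊕ ⋯ ⊕ a` of a matrix, as a block diagonal matrix. -/
def nCopies {A : Type*} [Zero A] (n : ℕ) {ι : Type*} [Fintype ι] [DecidableEq ι]
    (a : Matrix ι ι A) : Matrix (ι × Fin n) (ι × Fin n) A :=
  Matrix.blockDiagonal fun _ : Fin n => a

/-- The Pedersen ideal of `A`: the intersection of all dense two-sided ideals (this is the
smallest dense two-sided ideal). -/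
def pedersenIdeal (A : Type*) [NonUnitalCStarAlgebra A] : Set A :=
  {a : A | ∀ I : TwoSidedIdeal A, Dense (I : Set A) → a ∈ I}

/-- A C*-algebra is simple if it is nonzero and has no nontrivial closed two-sided ideals. -/
def IsSimpleCStar (A : Type*) [NonUnitalCStarAlgebra A] : Prop :=
  (∃ a : A, a ≠ 0) ∧ ∀ I : TwoSidedIdeal A, IsClosed (I : Set A) → I = ⊥ ∨ I = ⊤

/-- A dimension function on `A`: a function on positive elements of matrix algebras over `A`
(i.e. on `M_∞(A)₊`), additive on direct sums and order preserving for Cuntz subequivalence. -/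
structure DimFn (A : Type*) [NonUnitalCStarAlgebra A] where
  d : ∀ (ι : Type) [Fintype ι], Matrix ι ι A → ℝ≥0∞
  additive : ∀ (ι κ : Type) [Fintype ι] [Fintype κ] (a : Matrix ι ι A) (b : Matrix κ κ A),
    MatPos a → MatPos b →
      d (ι ⊕ κ) (Matrix.fromBlocks a 0 0 b) = d ι a + d κ b
  mono : ∀ (ι κ : Type) [Fintype ι] [Fintype κ] (a : Matrix ι ι A) (b : Matrix κ κ A),
    MatPos a → MatPos b → MCuntzLE a b → d ι a ≤ d κ b

/-- A positive element `a` of a C*-algebra is finite if there is no nonzero positive `b` with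
`a ⊕ b ≾ a` in `M₂(A)` (here realized over the index type `Fin 1 ⊕ Fin 1`). -/
def IsFiniteElt {A : Type*} [NonUnitalCStarAlgebra A] [PartialOrder A] [StarOrderedRing A]
    (a : A) : Prop :=
  ¬ ∃ b : A, 0 ≤ b ∧ b ≠ 0 ∧
      MCuntzLE (Matrix.fromBlocks (mOne a) 0 0 (mOne b)) (mOne a)

/-! ### Auxiliary machinery for the proof -/

section S9Real

lemma S9.habs {n : ℕ} (hn : 1 ≤ n) {t : ℝ} (ht : 0 ≤ t) :
    |t - (n : ℝ) ^ 2 * t ^ 2 / (1 + (n : ℝ) * t) ^ 2 * t| ≤ 2 / (n : ℝ) := by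
  have hn' : (1 : ℝ) ≤ n := by exact_mod_cast hn
  have hn0 : (0 : ℝ) < n := by linarith
  have hnt : (0 : ℝ) ≤ (n : ℝ) * t := by positivity
  have hd2 : (0 : ℝ) < (1 + (n : ℝ) * t) ^ 2 := by positivity
  have he : t - (n : ℝ) ^ 2 * t ^ 2 / (1 + (n : ℝ) * t) ^ 2 * t
      = t * (1 + 2 * (n : ℝ) * t) / (1 + (n : ℝ) * t) ^ 2 := by
    field_simp; ring
  rw [he, abs_of_nonneg (by positivity), div_le_div_iff₀ hd2 hn0]
  nlinarith [hnt, mul_nonneg hnt ht]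

lemma S9.hfun_le_one {n : ℕ} {t : ℝ} (ht : 0 ≤ t) :
    (n : ℝ) ^ 2 * t ^ 2 / (1 + (n : ℝ) * t) ^ 2 ≤ 1 := by
  have hnt : (0 : ℝ) ≤ (n : ℝ) * t := by positivity
  have hd2 : (0 : ℝ) < (1 + (n : ℝ) * t) ^ 2 := by positivity
  rw [div_le_one hd2]
  nlinarith [hnt]

end S9Real

namespace S9

set_option linter.unusedSectionVars false
set_option maxHeartbeats 1000000

variable {A : Type*} [NonUnitalCStarAlgebra A] [PartialOrder A] [StarOrderedRing A]

lemma mOne_mul (x y : A) : mOne x * mOne y = mOne (x * y) := by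
  ext i j; simp [mOne, Matrix.mul_apply]

lemma mOne_conjT (x : A) : (mOne x)ᴴ = mOne (star x) := by
  ext i j; simp [mOne]

lemma tendsto_mOne {f : ℕ → A} {x : A} (h : Tendsto f atTop (𝓝 x)) :
    Tendsto (fun n => mOne (f n)) atTop (𝓝 (mOne x)) :=
  tendsto_pi_nhds.mpr fun _ => tendsto_pi_nhds.mpr fun _ => h

lemma tendsto_of_norm_le {f : ℕ → A} {x : A} (h : ∀ n : ℕ, 1 ≤ n → ‖f n - x‖ ≤ 2 / n) :
    Tendsto f atTop (𝓝 x) := by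
  rw [← tendsto_sub_nhds_zero_iff]
  refine squeeze_zero_norm' ?_ (tendsto_const_div_atTop_nhds_zero_nat 2)
  exact Filter.eventually_atTop.mpr ⟨1, h⟩

/-- The square root of a positive element, via the continuous functional calculus. -/
noncomputable def ssqrt (x : A) : A := cfcₙ Real.sqrt x

lemma ssqrt_star (x : A) : star (ssqrt x) = ssqrt x :=
  (cfcₙ_predicate Real.sqrt x).star_eq

lemma ssqrt_mul_self {x : A} (hx : 0 ≤ x) : ssqrt x * ssqrt x = x := by
  rw [ssqrt, ← cfcₙ_mul Real.sqrt Real.sqrt x]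
  have h1 : (quasispectrum ℝ x).EqOn (fun t => Real.sqrt t * Real.sqrt t) id := fun t ht =>
    Real.mul_self_sqrt (quasispectrum_nonneg_of_nonneg x hx t ht)
  rw [cfcₙ_congr h1, cfcₙ_id ℝ x]

lemma conj_self_nonneg {q : A} (hq : 0 ≤ q) (z : A) : 0 ≤ z * q * star z := by
  have h : z * q * star z = (z * ssqrt q) * star (z * ssqrt q) := by
    rw [StarMul.star_mul, ssqrt_star]
    calc z * q * star z = z * (ssqrt q * ssqrt q) * star z := by rw [ssqrt_mul_self hq]
      _ = z * ssqrt q * (ssqrt q * star z) := by noncomm_ring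
  rw [h]
  exact mul_star_self_nonneg _

/-- smooth approximate-unit function -/
noncomputable def gfun (n : ℕ) (t : ℝ) : ℝ := (n : ℝ) * t / (1 + (n : ℝ) * t)

lemma gfun_contOn {s : Set ℝ} (hs : ∀ t ∈ s, 0 ≤ t) (n : ℕ) : ContinuousOn (gfun n) s := by
  refine ContinuousOn.div (by fun_prop) (by fun_prop) fun t ht => ?_
  have h1 := hs t ht
  have h2 : (0:ℝ) ≤ (n:ℝ) * t := by positivity
  positivity

lemma gfun_zero (n : ℕ) : gfun n 0 = 0 := by simp [gfun]

/-- The canonical sequential approximate unit associated to a positive element. -/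
noncomputable def apx (n : ℕ) (x : A) : A := cfcₙ (gfun n) x

lemma apx_star (n : ℕ) (x : A) : star (apx n x) = apx n x :=
  (cfcₙ_predicate (gfun n) x).star_eq

lemma tendsto_apx (x : A) (hx : 0 ≤ x) :
    Tendsto (fun n => apx n x * x * apx n x) atTop (𝓝 x) := by
  have hqs : ∀ t ∈ quasispectrum ℝ x, (0:ℝ) ≤ t := quasispectrum_nonneg_of_nonneg x hx
  refine tendsto_of_norm_le fun n hn => ?_
  rw [norm_sub_rev]
  have hg : ContinuousOn (gfun n) (quasispectrum ℝ x) := gfun_contOn hqs n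
  have hg0 : gfun n 0 = 0 := gfun_zero n
  have hgi : ContinuousOn (fun t : ℝ => gfun n t * t) (quasispectrum ℝ x) :=
    hg.mul continuousOn_id
  have h1 : cfcₙ (fun t : ℝ => gfun n t * t * gfun n t) x = apx n x * x * apx n x := by
    rw [cfcₙ_mul (fun t : ℝ => gfun n t * t) (gfun n) x hgi (by simp [hg0]) hg hg0,
      cfcₙ_mul (gfun n) (fun t : ℝ => t) x hg hg0 continuousOn_id rfl, cfcₙ_id' ℝ x]
    rfl
  have h2 : x - apx n x * x * apx n x
      = cfcₙ (fun t : ℝ => t - gfun n t * t * gfun n t) x := by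
    rw [cfcₙ_sub (fun t : ℝ => t) (fun t : ℝ => gfun n t * t * gfun n t) x
      continuousOn_id rfl (hgi.mul hg) (by simp [hg0]), cfcₙ_id' ℝ x, h1]
  rw [h2]
  refine norm_cfcₙ_le fun t ht => ?_
  have ht0 := hqs t ht
  have hd : (0:ℝ) < 1 + (n:ℝ) * t := by positivity
  have he : gfun n t * t * gfun n t = (n : ℝ) ^ 2 * t ^ 2 / (1 + (n : ℝ) * t) ^ 2 * t := by
    rw [gfun]; field_simp
  rw [Real.norm_eq_abs, he]
  exact habs hn ht0

/-- The function used in the proof that `a ≤ c` implies `a ≾ c`. -/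
noncomputable def ffun (n : ℕ) (t : ℝ) : ℝ := (n : ℝ) * Real.sqrt t / (1 + (n : ℝ) * t)

noncomputable def Ffun (n : ℕ) (t : ℝ) : ℝ := ffun n t * t * ffun n t

lemma ffun_contOn {s : Set ℝ} (hs : ∀ t ∈ s, 0 ≤ t) (n : ℕ) : ContinuousOn (ffun n) s := by
  refine ContinuousOn.div (by fun_prop) (by fun_prop) fun t ht => ?_
  have h1 := hs t ht
  have h2 : (0:ℝ) ≤ (n:ℝ) * t := by positivity
  positivity

lemma Ffun_contOn {s : Set ℝ} (hs : ∀ t ∈ s, 0 ≤ t) (n : ℕ) : ContinuousOn (Ffun n) s :=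
  ((ffun_contOn hs n).mul continuousOn_id).mul (ffun_contOn hs n)

lemma ffun_zero (n : ℕ) : ffun n 0 = 0 := by simp [ffun]

lemma Ffun_zero (n : ℕ) : Ffun n 0 = 0 := by simp [Ffun, ffun_zero]

lemma Ffun_eq {n : ℕ} {t : ℝ} (ht : 0 ≤ t) :
    Ffun n t = (n : ℝ) ^ 2 * t ^ 2 / (1 + (n : ℝ) * t) ^ 2 := by
  have hsq : Real.sqrt t * Real.sqrt t = t := Real.mul_self_sqrt ht
  have hnt : (0 : ℝ) ≤ (n : ℝ) * t := by positivity
  have hd : (0 : ℝ) < 1 + (n : ℝ) * t := by linarith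
  rw [Ffun, ffun]
  field_simp
  linear_combination ((n:ℝ)^2 * t) * hsq

lemma Ffun_le_one {n : ℕ} {t : ℝ} (ht : 0 ≤ t) : Ffun n t ≤ 1 := by
  rw [Ffun_eq ht]; exact hfun_le_one ht

lemma key_norm_bound {a c : A} (ha : 0 ≤ a) (hc : 0 ≤ c) (hle : a ≤ c) {n : ℕ} (hn : 1 ≤ n) :
    ‖a - ssqrt a * cfcₙ (Ffun n) c * ssqrt a‖ ≤ 2 / (n : ℝ) := by
  have hqs : ∀ t ∈ quasispectrum ℝ c, (0:ℝ) ≤ t := quasispectrum_nonneg_of_nonneg c hc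
  set B := Unitization ℂ A
  have hc' : (0 : B) ≤ (c : B) := Unitization.inr_nonneg_iff.mpr hc
  have hspec : ∀ t ∈ spectrum ℝ (c : B), (0:ℝ) ≤ t := by
    intro t ht
    exact hqs t (by rwa [Unitization.quasispectrum_eq_spectrum_inr' ℝ ℂ c])
  have hFc' : ContinuousOn (Ffun n) (spectrum ℝ (c : B)) := Ffun_contOn hspec n
  have hu' : ((cfcₙ (Ffun n) c : A) : B) = cfc (Ffun n) (c : B) :=
    Unitization.real_cfcₙ_eq_cfc_inr c (Ffun n) (Ffun_zero n)
  set sa : A := ssqrt a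
  have hsa : _root_.IsSelfAdjoint sa := ssqrt_star a
  have hsa' : _root_.IsSelfAdjoint ((sa : A) : B) := hsa.inr ℂ
  have hsasa : ((sa : A) : B) * ((sa : A) : B) = ((a : A) : B) := by
    rw [← Unitization.inr_mul, ssqrt_mul_self ha]
  set ρ : B := cfc (fun t : ℝ => Real.sqrt (1 - Ffun n t)) (c : B) with hρ_def
  have hρcont : ContinuousOn (fun t : ℝ => Real.sqrt (1 - Ffun n t)) (spectrum ℝ (c : B)) :=
    Real.continuous_sqrt.comp_continuousOn (continuousOn_const.sub hFc')
  have hρsa : _root_.IsSelfAdjoint ρ := cfc_predicate _ _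
  have hρρ : ρ * ρ = 1 - cfc (Ffun n) (c : B) := by
    rw [hρ_def, ← cfc_mul _ _ (c : B) hρcont hρcont]
    have h1 : (spectrum ℝ (c : B)).EqOn
        (fun t => Real.sqrt (1 - Ffun n t) * Real.sqrt (1 - Ffun n t))
        (fun t => 1 - Ffun n t) := by
      intro t ht
      exact Real.mul_self_sqrt (by linarith [Ffun_le_one (n := n) (hspec t ht)])
    rw [cfc_congr h1, cfc_sub _ _ (c : B) continuousOn_const hFc', cfc_const_one ℝ (c : B)]
  set z : B := ((sa : A) : B) * ρ with hz_def
  have hzstar : star z = ρ * ((sa : A) : B) := by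
    rw [hz_def, StarMul.star_mul, hρsa.star_eq, hsa'.star_eq]
  have heq : ((a - sa * cfcₙ (Ffun n) c * sa : A) : B) = z * star z := by
    rw [hzstar, hz_def]
    calc ((a - sa * cfcₙ (Ffun n) c * sa : A) : B)
        = ((a:A) : B) - ((sa:A) : B) * cfc (Ffun n) (c : B) * ((sa:A) : B) := by
          rw [Unitization.inr_sub, Unitization.inr_mul, Unitization.inr_mul, hu']
      _ = ((sa:A) : B) * (1 - cfc (Ffun n) (c : B)) * ((sa:A) : B) := by
          rw [mul_sub, sub_mul, mul_one, hsasa]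
      _ = ((sa:A) : B) * (ρ * ρ) * ((sa:A) : B) := by rw [hρρ]
      _ = ((sa:A) : B) * ρ * (ρ * ((sa:A) : B)) := by noncomm_ring
  have hstarz : star z * z = ρ * ((a:A) : B) * ρ := by
    rw [hzstar, hz_def]
    calc ρ * ((sa:A) : B) * (((sa:A) : B) * ρ) = ρ * (((sa:A) : B) * ((sa:A) : B)) * ρ := by
          noncomm_ring
      _ = ρ * ((a:A) : B) * ρ := by rw [hsasa]
  have hle' : ((a:A) : B) ≤ ((c:A) : B) :=
    (Unitization.inr_le_iff a c (.of_nonneg ha) (.of_nonneg hc)).mpr hle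
  have hmono : ρ * ((a:A) : B) * ρ ≤ ρ * ((c:A) : B) * ρ := hρsa.conjugate_le_conjugate hle'
  have hnonneg : (0 : B) ≤ ρ * ((a:A) : B) * ρ :=
    hρsa.conjugate_nonneg (Unitization.inr_nonneg_iff.mpr ha)
  have hρcρ : ρ * ((c:A) : B) * ρ = cfc (fun t : ℝ => (1 - Ffun n t) * t) (c : B) := by
    conv_lhs => rw [← cfc_id ℝ (c : B)]
    rw [hρ_def, ← cfc_mul _ _ (c : B) hρcont continuousOn_id,
      ← cfc_mul (fun x : ℝ => Real.sqrt (1 - Ffun n x) * id x) _ (c : B)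
        (hρcont.mul continuousOn_id) hρcont]
    refine cfc_congr fun t ht => ?_
    have ht0 := hspec t ht
    have h1 : (0:ℝ) ≤ 1 - Ffun n t := by linarith [Ffun_le_one (n := n) ht0]
    have hsq : Real.sqrt (1 - Ffun n t) * Real.sqrt (1 - Ffun n t) = 1 - Ffun n t :=
      Real.mul_self_sqrt h1
    show Real.sqrt (1 - Ffun n t) * id t * Real.sqrt (1 - Ffun n t) = (1 - Ffun n t) * t
    simp only [id_eq]
    calc Real.sqrt (1 - Ffun n t) * t * Real.sqrt (1 - Ffun n t)
        = Real.sqrt (1 - Ffun n t) * Real.sqrt (1 - Ffun n t) * t := by ring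
      _ = (1 - Ffun n t) * t := by rw [hsq]
  have hbound : ‖cfc (fun t : ℝ => (1 - Ffun n t) * t) (c : B)‖ ≤ 2 / (n : ℝ) := by
    refine norm_cfc_le (by positivity) fun t ht => ?_
    have ht0 := hspec t ht
    rw [Real.norm_eq_abs]
    have h2 : (1 - Ffun n t) * t = t - (n : ℝ) ^ 2 * t ^ 2 / (1 + (n : ℝ) * t) ^ 2 * t := by
      rw [Ffun_eq ht0]; ring
    rw [h2]
    exact habs hn ht0
  calc ‖a - sa * cfcₙ (Ffun n) c * sa‖
      = ‖((a - sa * cfcₙ (Ffun n) c * sa : A) : B)‖ := (Unitization.norm_inr _).symm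
    _ = ‖z * star z‖ := by rw [heq]
    _ = ‖star z * z‖ := by rw [CStarRing.norm_self_mul_star, ← CStarRing.norm_star_mul_self]
    _ = ‖ρ * ((a:A) : B) * ρ‖ := by rw [hstarz]
    _ ≤ ‖ρ * ((c:A) : B) * ρ‖ := CStarAlgebra.norm_le_norm_of_nonneg_of_le hnonneg hmono
    _ ≤ 2 / (n : ℝ) := by rw [hρcρ]; exact hbound

lemma mcuntz_of_le {a c : A} (ha : 0 ≤ a) (hc : 0 ≤ c) (hle : a ≤ c) :
    MCuntzLE (mOne a) (mOne c) := by
  have hqs : ∀ t ∈ quasispectrum ℝ c, (0:ℝ) ≤ t := quasispectrum_nonneg_of_nonneg c hc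
  refine ⟨fun n => mOne (ssqrt a * cfcₙ (ffun n) c), ?_⟩
  have hcomp : ∀ n : ℕ, mOne (ssqrt a * cfcₙ (ffun n) c) * mOne c
      * (mOne (ssqrt a * cfcₙ (ffun n) c))ᴴ
      = mOne (ssqrt a * cfcₙ (Ffun n) c * ssqrt a) := by
    intro n
    have hf : ContinuousOn (ffun n) (quasispectrum ℝ c) := ffun_contOn hqs n
    have hw : star (cfcₙ (ffun n) c) = cfcₙ (ffun n) c := (cfcₙ_predicate (ffun n) c).star_eq
    have hwcw : cfcₙ (ffun n) c * c * cfcₙ (ffun n) c = cfcₙ (Ffun n) c := by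
      have h2 : cfcₙ (Ffun n) c = cfcₙ (fun t : ℝ => ffun n t * t * ffun n t) c := rfl
      rw [h2, cfcₙ_mul (fun t : ℝ => ffun n t * t) (ffun n) c (hf.mul continuousOn_id)
          (by simp [ffun_zero]) hf (ffun_zero n),
        cfcₙ_mul (ffun n) (fun t : ℝ => t) c hf (ffun_zero n) continuousOn_id rfl,
        cfcₙ_id' ℝ c]
    rw [mOne_conjT, StarMul.star_mul, hw, ssqrt_star, mOne_mul, mOne_mul]
    have h3 : ssqrt a * cfcₙ (ffun n) c * c * (cfcₙ (ffun n) c * ssqrt a)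
        = ssqrt a * cfcₙ (Ffun n) c * ssqrt a := by rw [← hwcw]; noncomm_ring
    rw [h3]
  simp only [hcomp]
  refine tendsto_mOne (tendsto_of_norm_le fun n hn => ?_)
  rw [norm_sub_rev]
  exact key_norm_bound ha hc hle hn

lemma matPos_mOne {x : A} (hx : 0 ≤ x) : MatPos (mOne x) :=
  ⟨mOne (ssqrt x), by rw [mOne_conjT, ssqrt_star, mOne_mul, ssqrt_mul_self hx]⟩

lemma matPos_conj (q : A) (hq : 0 ≤ q) (z : A) : MatPos (mOne (z * q * star z)) := by
  refine ⟨mOne (ssqrt q * star z), ?_⟩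
  rw [mOne_conjT, StarMul.star_mul, star_star, ssqrt_star, mOne_mul]
  refine congrArg mOne ?_
  calc z * q * star z = z * (ssqrt q * ssqrt q) * star z := by rw [ssqrt_mul_self hq]
    _ = z * ssqrt q * (ssqrt q * star z) := by noncomm_ring

lemma matPos_fromBlocks {x y : A} (hx : 0 ≤ x) (hy : 0 ≤ y) :
    MatPos (Matrix.fromBlocks (mOne x) 0 0 (mOne y)) := by
  refine ⟨Matrix.fromBlocks (mOne (ssqrt x)) 0 0 (mOne (ssqrt y)), ?_⟩
  rw [Matrix.fromBlocks_conjTranspose, Matrix.fromBlocks_multiply]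
  simp [mOne_conjT, ssqrt_star, mOne_mul, ssqrt_mul_self hx, ssqrt_mul_self hy]

lemma matPos_zero {ι : Type} [Fintype ι] : MatPos (0 : Matrix ι ι A) := ⟨0, by simp⟩

lemma mcuntz_conj (q : A) (z : A) : MCuntzLE (mOne (z * q * star z)) (mOne q) := by
  refine ⟨fun _ => mOne z, ?_⟩
  have h : mOne z * mOne q * (mOne z)ᴴ = mOne (z * q * star z) := by
    rw [mOne_conjT, mOne_mul, mOne_mul]
  simp only [h]
  exact tendsto_const_nhds

lemma mcuntz_add {x y : A} (hx : 0 ≤ x) (hy : 0 ≤ y) :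
    MCuntzLE (mOne (x + y)) (Matrix.fromBlocks (mOne x) 0 0 (mOne y)) := by
  refine ⟨fun n => Matrix.of fun _ j => Sum.elim (fun _ : Fin 1 => apx n x)
    (fun _ : Fin 1 => apx n y) j, ?_⟩
  have hcomp : ∀ n : ℕ, (Matrix.of fun (_ : Fin 1) j => Sum.elim (fun _ : Fin 1 => apx n x)
        (fun _ : Fin 1 => apx n y) j) * Matrix.fromBlocks (mOne x) 0 0 (mOne y)
      * (Matrix.of fun (_ : Fin 1) j => Sum.elim (fun _ : Fin 1 => apx n x)
        (fun _ : Fin 1 => apx n y) j)ᴴ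
      = mOne (apx n x * x * apx n x + apx n y * y * apx n y) := by
    intro n
    ext i j
    simp [Matrix.mul_apply, Matrix.conjTranspose_apply, Fintype.sum_sum_type,
      Matrix.fromBlocks, mOne, apx_star]
  simp only [hcomp]
  exact tendsto_mOne ((tendsto_apx x hx).add (tendsto_apx y hy))

lemma mcuntz_nsmul {q : A} (hq : 0 ≤ q) (k : ℕ) : MCuntzLE (mOne (k • q)) (mOne q) := by
  set c : ℂ := ((Real.sqrt k : ℝ) : ℂ) with hc
  have hcc : c * star c = ((k : ℝ) : ℂ) := by
    rw [hc, Complex.star_def, Complex.conj_ofReal, ← Complex.ofReal_mul,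
      Real.mul_self_sqrt (by positivity)]
  refine ⟨fun n => mOne (c • apx n q), ?_⟩
  have hcomp : ∀ n : ℕ, mOne (c • apx n q) * mOne q * (mOne (c • apx n q))ᴴ
      = mOne ((k : ℂ) • (apx n q * q * apx n q)) := by
    intro n
    rw [mOne_conjT, star_smul, apx_star, mOne_mul, mOne_mul]
    refine congrArg mOne ?_
    rw [smul_mul_assoc, smul_mul_assoc, mul_smul_comm, smul_smul, hcc]
    norm_cast
  simp only [hcomp]
  have h4 := (tendsto_apx q hq).const_smul ((k : ℂ))
  have h3 : (k : ℂ) • q = k • q := Nat.cast_smul_eq_nsmul ℂ k q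
  rw [← h3]
  exact tendsto_mOne h4

/-! ### Dimension function inequalities -/

lemma d_le_of_le (D : DimFn A) {x c : A} (hx : 0 ≤ x) (hc : 0 ≤ c) (h : x ≤ c) :
    D.d (Fin 1) (mOne x) ≤ D.d (Fin 1) (mOne c) :=
  D.mono _ _ _ _ (matPos_mOne hx) (matPos_mOne hc) (mcuntz_of_le hx hc h)

lemma d_add_le (D : DimFn A) {x y : A} (hx : 0 ≤ x) (hy : 0 ≤ y) :
    D.d (Fin 1) (mOne (x + y)) ≤ D.d (Fin 1) (mOne x) + D.d (Fin 1) (mOne y) := by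
  have h1 := D.mono (Fin 1) (Sum (Fin 1) (Fin 1)) (mOne (x + y))
    (Matrix.fromBlocks (mOne x) 0 0 (mOne y)) (matPos_mOne (add_nonneg hx hy))
    (matPos_fromBlocks hx hy) (mcuntz_add hx hy)
  rwa [D.additive (Fin 1) (Fin 1) (mOne x) (mOne y) (matPos_mOne hx) (matPos_mOne hy)] at h1

lemma d_conj_le (D : DimFn A) {q : A} (hq : 0 ≤ q) (z : A) :
    D.d (Fin 1) (mOne (z * q * star z)) ≤ D.d (Fin 1) (mOne q) :=
  D.mono _ _ _ _ (matPos_conj q hq z) (matPos_mOne hq) (mcuntz_conj q z)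

lemma d_nsmul_le (D : DimFn A) {q : A} (hq : 0 ≤ q) (k : ℕ) :
    D.d (Fin 1) (mOne (k • q)) ≤ D.d (Fin 1) (mOne q) :=
  D.mono _ _ _ _ (matPos_mOne (nsmul_nonneg hq k)) (matPos_mOne hq) (mcuntz_nsmul hq k)

lemma d_bound_sum (D : DimFn A) {q : A} (hq : 0 ≤ q) (k : ℕ) (L : List A) :
    0 ≤ k • q + (L.map (fun z => z * q * star z)).sum ∧
    D.d (Fin 1) (mOne (k • q + (L.map (fun z => z * q * star z)).sum))
      ≤ ((L.length + 1 : ℕ) : ℝ≥0∞) * D.d (Fin 1) (mOne q) := by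
  induction L with
  | nil =>
    refine ⟨by simpa using nsmul_nonneg hq k, ?_⟩
    simpa using d_nsmul_le D hq k
  | cons z L ih =>
    have hz : 0 ≤ z * q * star z := conj_self_nonneg hq z
    have heq : k • q + ((z :: L).map (fun z => z * q * star z)).sum
        = z * q * star z + (k • q + (L.map (fun z => z * q * star z)).sum) := by
      simp only [List.map_cons, List.sum_cons]
      rw [add_left_comm]
    constructor
    · rw [heq]; exact add_nonneg hz ih.1
    · rw [heq]
      calc D.d (Fin 1) (mOne (z * q * star z + (k • q + (L.map (fun z => z * q * star z)).sum)))
          ≤ D.d (Fin 1) (mOne (z * q * star z))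
            + D.d (Fin 1) (mOne (k • q + (L.map (fun z => z * q * star z)).sum)) :=
            d_add_le D hz ih.1
        _ ≤ D.d (Fin 1) (mOne q) + ((L.length + 1 : ℕ) : ℝ≥0∞) * D.d (Fin 1) (mOne q) :=
            add_le_add (d_conj_le D hq z) ih.2
        _ = (((z :: L).length + 1 : ℕ) : ℝ≥0∞) * D.d (Fin 1) (mOne q) := by
            simp only [List.length_cons]
            push_cast
            ring

/-! ### The ideal generated by a positive element -/

def genSet (q : A) : Set A :=
  {y | y = q ∨ (∃ u, y = u * q) ∨ (∃ u, y = q * u) ∨ (∃ u w, y = u * q * w)}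

lemma q_mem_genSet (q : A) : q ∈ genSet q := Or.inl rfl

lemma genN_mul_left (q : A) (c x : A) (hx : x ∈ AddSubgroup.closure (genSet q)) :
    c * x ∈ AddSubgroup.closure (genSet q) := by
  refine AddSubgroup.closure_induction
    (p := fun y _ => c * y ∈ AddSubgroup.closure (genSet q)) ?_ ?_ ?_ ?_ hx
  · intro y hy
    refine AddSubgroup.subset_closure ?_
    rcases hy with rfl | ⟨u, rfl⟩ | ⟨u, rfl⟩ | ⟨u, w, rfl⟩
    · exact Or.inr (Or.inl ⟨c, rfl⟩)
    · exact Or.inr (Or.inl ⟨c * u, by rw [mul_assoc]⟩)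
    · exact Or.inr (Or.inr (Or.inr ⟨c, u, by rw [mul_assoc]⟩))
    · exact Or.inr (Or.inr (Or.inr ⟨c * u, w, by simp [mul_assoc]⟩))
  · show c * (0 : A) ∈ AddSubgroup.closure (genSet q)
    rw [mul_zero]; exact AddSubgroup.zero_mem _
  · intro x y _ _ ihx ihy
    show c * (x + y) ∈ AddSubgroup.closure (genSet q)
    rw [mul_add]; exact AddSubgroup.add_mem _ ihx ihy
  · intro x _ ihx
    show c * (-x) ∈ AddSubgroup.closure (genSet q)
    rw [mul_neg]; exact AddSubgroup.neg_mem _ ihx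

lemma genN_mul_right (q : A) (c x : A) (hx : x ∈ AddSubgroup.closure (genSet q)) :
    x * c ∈ AddSubgroup.closure (genSet q) := by
  refine AddSubgroup.closure_induction
    (p := fun y _ => y * c ∈ AddSubgroup.closure (genSet q)) ?_ ?_ ?_ ?_ hx
  · intro y hy
    refine AddSubgroup.subset_closure ?_
    rcases hy with rfl | ⟨u, rfl⟩ | ⟨u, rfl⟩ | ⟨u, w, rfl⟩
    · exact Or.inr (Or.inr (Or.inl ⟨c, rfl⟩))
    · exact Or.inr (Or.inr (Or.inr ⟨u, c, rfl⟩))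
    · exact Or.inr (Or.inr (Or.inl ⟨u * c, by rw [mul_assoc]⟩))
    · exact Or.inr (Or.inr (Or.inr ⟨u, w * c, by simp [mul_assoc]⟩))
  · show (0 : A) * c ∈ AddSubgroup.closure (genSet q)
    rw [zero_mul]; exact AddSubgroup.zero_mem _
  · intro x y _ _ ihx ihy
    show (x + y) * c ∈ AddSubgroup.closure (genSet q)
    rw [add_mul]; exact AddSubgroup.add_mem _ ihx ihy
  · intro x _ ihx
    show (-x) * c ∈ AddSubgroup.closure (genSet q)
    rw [neg_mul]; exact AddSubgroup.neg_mem _ ihx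

/-- The basic bound: an element plus its star is dominated by a finite combination of
conjugates of `q`. -/
def BndL (q x : A) : Prop :=
  ∃ (k : ℕ) (L : List A), x + star x ≤ k • q + (L.map (fun z => z * q * star z)).sum

lemma gen_ineq {q : A} (hq : 0 ≤ q) (u w : A) :
    u * q * w + star w * q * star u ≤ u * q * star u + star w * q * w := by
  have h := star_mul_self_nonneg (ssqrt q * star u - ssqrt q * w)
  have hs := ssqrt_mul_self hq
  have hexp : star (ssqrt q * star u - ssqrt q * w) * (ssqrt q * star u - ssqrt q * w)
      = u * q * star u - u * q * w - star w * q * star u + star w * q * w := by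
    rw [star_sub, StarMul.star_mul, StarMul.star_mul, star_star, ssqrt_star]
    calc (u * ssqrt q - star w * ssqrt q) * (ssqrt q * star u - ssqrt q * w)
        = u * (ssqrt q * ssqrt q) * star u - u * (ssqrt q * ssqrt q) * w
          - star w * (ssqrt q * ssqrt q) * star u + star w * (ssqrt q * ssqrt q) * w := by
          noncomm_ring
      _ = _ := by rw [hs]
  rw [hexp] at h
  have h2 : (u * q * star u + star w * q * w) - (u * q * w + star w * q * star u)
      = u * q * star u - u * q * w - star w * q * star u + star w * q * w := by abel
  rw [← h2] at h
  exact sub_nonneg.mp h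

lemma gen_ineq2 {q : A} (hq : 0 ≤ q) (u : A) :
    u * q + q * star u ≤ q + u * q * star u := by
  have h := star_mul_self_nonneg (ssqrt q * star u - ssqrt q)
  have hs := ssqrt_mul_self hq
  have hexp : star (ssqrt q * star u - ssqrt q) * (ssqrt q * star u - ssqrt q)
      = u * q * star u - u * q - q * star u + q := by
    rw [star_sub, StarMul.star_mul, star_star, ssqrt_star]
    calc (u * ssqrt q - ssqrt q) * (ssqrt q * star u - ssqrt q)
        = u * (ssqrt q * ssqrt q) * star u - u * (ssqrt q * ssqrt q)
          - (ssqrt q * ssqrt q) * star u + ssqrt q * ssqrt q := by noncomm_ring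
      _ = _ := by rw [hs]
  rw [hexp] at h
  have h2 : (q + u * q * star u) - (u * q + q * star u)
      = u * q * star u - u * q - q * star u + q := by abel
  rw [← h2] at h
  exact sub_nonneg.mp h

lemma bnd_zero (q : A) : BndL q 0 := ⟨0, [], by simp⟩

lemma bnd_add {q x y : A} (hx : BndL q x) (hy : BndL q y) : BndL q (x + y) := by
  obtain ⟨k1, L1, h1⟩ := hx
  obtain ⟨k2, L2, h2⟩ := hy
  refine ⟨k1 + k2, L1 ++ L2, ?_⟩
  have h3 : (x + y) + star (x + y) = (x + star x) + (y + star y) := by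
    rw [star_add]; abel
  rw [h3, List.map_append, List.sum_append, add_nsmul]
  calc (x + star x) + (y + star y)
      ≤ (k1 • q + (L1.map (fun z => z * q * star z)).sum)
        + (k2 • q + (L2.map (fun z => z * q * star z)).sum) := add_le_add h1 h2
    _ = k1 • q + k2 • q + ((L1.map (fun z => z * q * star z)).sum
        + (L2.map (fun z => z * q * star z)).sum) := by abel

lemma bnd_gen {q : A} (hq : 0 ≤ q) : ∀ y ∈ genSet q, BndL q y ∧ BndL q (-y) := by
  have hqs : star q = q := (IsSelfAdjoint.of_nonneg hq).star_eq
  have hR1 : ∀ v : A, ((1 : ℕ) • q : A) + (([v] : List A).map (fun z => z * q * star z)).sum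
      = q + v * q * star v := by intro v; simp
  have hR2 : ∀ v1 v2 : A,
      ((0 : ℕ) • q : A) + (([v1, v2] : List A).map (fun z => z * q * star z)).sum
      = v1 * q * star v1 + v2 * q * star v2 := by intro v1 v2; simp [← add_assoc]
  intro y hy
  rcases hy with hy0 | ⟨u, rfl⟩ | ⟨u, rfl⟩ | ⟨u, w, rfl⟩
  · obtain rfl : q = y := hy0.symm
    constructor
    · refine ⟨2, [], ?_⟩
      have hR : ((2 : ℕ) • q : A) + (([] : List A).map (fun z => z * q * star z)).sum = q + q := by
        simp [two_nsmul]
      rw [hqs, hR]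
    · refine ⟨0, [], ?_⟩
      have hR : ((0 : ℕ) • q : A) + (([] : List A).map (fun z => z * q * star z)).sum = 0 := by
        simp
      rw [hR, star_neg, hqs]
      have h0 : (0:A) ≤ q + q := add_nonneg hq hq
      calc -q + -q = -(q + q) := by abel
        _ ≤ 0 := neg_nonpos.mpr h0
  · constructor
    · refine ⟨1, [u], ?_⟩
      rw [hR1 u, StarMul.star_mul, hqs]
      exact gen_ineq2 hq u
    · refine ⟨1, [-u], ?_⟩
      have hstar : star (-(u * q)) = -(q * star u) := by
        rw [star_neg, StarMul.star_mul, hqs]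
      rw [hstar, hR1 (-u)]
      have e2 : (-u) * q * star (-u) = u * q * star u := by
        simp [neg_mul, mul_neg, star_neg]
      rw [e2]
      have h := gen_ineq2 hq (-u)
      rw [e2] at h
      have e1 : (-u) * q + q * star (-u) = -(u * q) + -(q * star u) := by
        simp [neg_mul, mul_neg, star_neg]
      rw [e1] at h
      exact h
  · constructor
    · refine ⟨1, [star u], ?_⟩
      have hstar : star (q * u) = star u * q := by rw [StarMul.star_mul, hqs]
      rw [hstar, hR1 (star u), star_star]
      have h := gen_ineq2 hq (star u)
      rw [star_star] at h
      calc q * u + star u * q = star u * q + q * u := by abel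
        _ ≤ q + star u * q * u := h
    · refine ⟨1, [-(star u)], ?_⟩
      have hstar : star (-(q * u)) = -(star u * q) := by
        rw [star_neg, StarMul.star_mul, hqs]
      rw [hstar, hR1 (-(star u))]
      have e2 : (-(star u)) * q * star (-(star u)) = star u * q * u := by
        simp [neg_mul, mul_neg, star_neg, star_star]
      rw [e2]
      have h := gen_ineq2 hq (-(star u))
      rw [e2] at h
      have e1 : (-(star u)) * q + q * star (-(star u)) = -(q * u) + -(star u * q) := by
        simp only [star_neg, star_star, neg_mul, mul_neg]
        abel
      rw [e1] at h
      exact h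
  · constructor
    · refine ⟨0, [u, star w], ?_⟩
      have hstar : star (u * q * w) = star w * q * star u := by
        rw [StarMul.star_mul, StarMul.star_mul, hqs, mul_assoc]
      rw [hstar, hR2 u (star w), star_star]
      exact gen_ineq hq u w
    · refine ⟨0, [-u, star w], ?_⟩
      have hstar : star (-(u * q * w)) = -(star w * q * star u) := by
        rw [star_neg, StarMul.star_mul, StarMul.star_mul, hqs, mul_assoc]
      rw [hstar, hR2 (-u) (star w), star_star]
      have e3 : (-u) * q * star (-u) = u * q * star u := by
        simp [neg_mul, mul_neg, star_neg]
      rw [e3]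
      have h := gen_ineq hq (-u) w
      rw [show ((-u) * q * star (-u) : A) = u * q * star u by
        simp [neg_mul, mul_neg, star_neg]] at h
      have e1 : (-u) * q * w + star w * q * star (-u)
          = -(u * q * w) + -(star w * q * star u) := by
        simp [neg_mul, mul_neg, star_neg]
      rw [e1] at h
      exact h

lemma bnd_of_mem {q : A} (hq : 0 ≤ q) {x : A} (hx : x ∈ AddSubgroup.closure (genSet q)) :
    BndL q x := by
  have h : BndL q x ∧ BndL q (-x) := by
    refine AddSubgroup.closure_induction (p := fun y _ => BndL q y ∧ BndL q (-y)) ?_ ?_ ?_ ?_ hx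
    · exact fun y hy => bnd_gen hq y hy
    · exact ⟨bnd_zero q, by rw [neg_zero]; exact bnd_zero q⟩
    · intro x y _ _ ihx ihy
      exact ⟨bnd_add ihx.1 ihy.1, by rw [neg_add]; exact bnd_add ihx.2 ihy.2⟩
    · intro x _ ihx
      exact ⟨ihx.2, by rw [neg_neg]; exact ihx.1⟩
  exact h.1

/-! ### The core lemma -/

lemma core (hA : IsSimpleCStar A) (D : DimFn A) {q p : A} (hq : 0 ≤ q) (hq0 : q ≠ 0)
    (hp : p ∈ pedersenIdeal A) (hp0 : 0 ≤ p) :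
    ∃ m : ℕ, D.d (Fin 1) (mOne p) ≤ (m : ℝ≥0∞) * D.d (Fin 1) (mOne q) := by
  set N : AddSubgroup A := AddSubgroup.closure (genSet q) with hN
  set J : TwoSidedIdeal A := TwoSidedIdeal.mk' (N : Set A) N.zero_mem
    (fun hx hy => N.add_mem hx hy) (fun hx => N.neg_mem hx)
    (fun {x y} hy => genN_mul_left q x y hy) (fun {x y} hx => genN_mul_right q y x hx) with hJ
  set K : TwoSidedIdeal A := TwoSidedIdeal.mk' (closure (N : Set A))
    (subset_closure N.zero_mem)
    (fun {x y} hx hy => map_mem_closure₂ continuous_add hx hy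
      (fun a ha b hb => N.add_mem ha hb))
    (fun {x} hx => map_mem_closure continuous_neg hx (fun a ha => N.neg_mem ha))
    (fun {x y} hy => map_mem_closure (continuous_mul_left x) hy
      (fun a ha => genN_mul_left q x a ha))
    (fun {x y} hx => map_mem_closure (f := fun b => b * y) (continuous_mul_right y) hx
      (fun a ha => genN_mul_right q y a ha)) with hK
  have hKclosed : IsClosed (K : Set A) := by
    rw [hK, TwoSidedIdeal.coe_mk']
    exact isClosed_closure
  rcases hA.2 K hKclosed with hbot | htop
  · exfalso
    have hqK : q ∈ K := by
      rw [hK, TwoSidedIdeal.mem_mk']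
      exact subset_closure (AddSubgroup.subset_closure (q_mem_genSet q))
    rw [hbot] at hqK
    exact hq0 (by rwa [TwoSidedIdeal.mem_bot] at hqK)
  · have hdense : Dense (J : Set A) := by
      rw [dense_iff_closure_eq]
      have h1 : (J : Set A) = (N : Set A) := by rw [hJ, TwoSidedIdeal.coe_mk']
      have h2 : (K : Set A) = closure (N : Set A) := by rw [hK, TwoSidedIdeal.coe_mk']
      rw [h1, ← h2, htop]
      ext x
      simp [TwoSidedIdeal.mem_top]
    have hpJ : p ∈ J := hp J hdense
    have hpN : p ∈ N := by rwa [hJ, TwoSidedIdeal.mem_mk'] at hpJ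
    obtain ⟨k, L, hle⟩ := bnd_of_mem hq hpN
    have hps : p + star p = p + p := by rw [(IsSelfAdjoint.of_nonneg hp0).star_eq]
    rw [hps] at hle
    have hle2 : p ≤ k • q + (L.map (fun z => z * q * star z)).sum :=
      le_trans (le_add_of_nonneg_left hp0) hle
    obtain ⟨hcpos, hd⟩ := d_bound_sum D hq k L
    exact ⟨L.length + 1, le_trans (d_le_of_le D hp0 hcpos hle2) hd⟩

end S9


/-- If a simple C*-algebra admits a dimension function taking a finite nonzero value on some
positive element of the Pedersen ideal, then every positive element of the Pedersen ideal is
finite. -/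
theorem stmt_9 {A : Type*} [NonUnitalCStarAlgebra A] [PartialOrder A] [StarOrderedRing A]
    (hA : IsSimpleCStar A)
    (hd : ∃ (d : DimFn A) (a : A), a ∈ pedersenIdeal A ∧ 0 ≤ a ∧
      0 < d.d (Fin 1) (mOne a) ∧ d.d (Fin 1) (mOne a) < ⊤) :
    ∀ a' : A, a' ∈ pedersenIdeal A → 0 ≤ a' → IsFiniteElt a' := by
  obtain ⟨D, a, haP, ha0, hpos, hfin⟩ := hd
  have hane : a ≠ 0 := by
    rintro rfl
    have hz : mOne (0 : A) = 0 := by ext i j; rfl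
    have hmp : MatPos (mOne (0 : A)) := by rw [hz]; exact S9.matPos_zero
    have hfb : Matrix.fromBlocks (mOne (0:A)) 0 0 (mOne (0:A))
        = (0 : Matrix (Sum (Fin 1) (Fin 1)) (Sum (Fin 1) (Fin 1)) A) := by
      rw [hz]; exact Matrix.fromBlocks_zero
    have h1 := D.additive (Fin 1) (Fin 1) (mOne (0:A)) (mOne (0:A)) hmp hmp
    have h2 : MCuntzLE (Matrix.fromBlocks (mOne (0:A)) 0 0 (mOne (0:A))) (mOne (0:A)) := by
      refine ⟨fun _ => 0, ?_⟩
      have h3 : (fun _ : ℕ => (0 : Matrix (Sum (Fin 1) (Fin 1)) (Fin 1) A) * mOne (0:A)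
          * (0 : Matrix (Sum (Fin 1) (Fin 1)) (Fin 1) A)ᴴ)
          = fun _ : ℕ => Matrix.fromBlocks (mOne (0:A)) 0 0 (mOne (0:A)) := by
        funext n
        rw [hfb]
        simp
      show Tendsto (fun _ : ℕ => (0 : Matrix (Sum (Fin 1) (Fin 1)) (Fin 1) A) * mOne (0:A)
          * (0 : Matrix (Sum (Fin 1) (Fin 1)) (Fin 1) A)ᴴ) atTop
          (𝓝 (Matrix.fromBlocks (mOne (0:A)) 0 0 (mOne (0:A))))
      rw [h3]
      exact tendsto_const_nhds
    have h4 := D.mono (Sum (Fin 1) (Fin 1)) (Fin 1) _ _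
      (by rw [hfb]; exact S9.matPos_zero) hmp h2
    rw [h1] at h4
    exact absurd h4 (not_le.mpr (ENNReal.lt_add_right hfin.ne hpos.ne'))
  intro p hpP hp0
  rintro ⟨b, hb0, hbne, hcz⟩
  obtain ⟨m, hm⟩ := S9.core hA D ha0 hane hpP hp0
  have hpfin : D.d (Fin 1) (mOne p) ≠ ⊤ := by
    refine ne_top_of_le_ne_top ?_ hm
    exact (ENNReal.mul_lt_top (ENNReal.natCast_lt_top m) hfin).ne
  have key : D.d (Fin 1) (mOne p) + D.d (Fin 1) (mOne b) ≤ D.d (Fin 1) (mOne p) := by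
    have h1 := D.additive (Fin 1) (Fin 1) (mOne p) (mOne b)
      (S9.matPos_mOne hp0) (S9.matPos_mOne hb0)
    have h2 := D.mono (Sum (Fin 1) (Fin 1)) (Fin 1) _ _
      (S9.matPos_fromBlocks hp0 hb0) (S9.matPos_mOne hp0) hcz
    rw [h1] at h2
    exact h2
  have hdb : D.d (Fin 1) (mOne b) = 0 := by
    by_contra h
    exact absurd key (not_le.mpr (ENNReal.lt_add_right hpfin h))
  obtain ⟨m2, hm2⟩ := S9.core hA D hb0 hbne haP ha0
  rw [hdb, mul_zero] at hm2
  exact absurd hm2 (not_le.mpr hpos)
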